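/- Combining both directions: for a tree 𝒯 with geometric decay parameter 0 < ρ < 1, 0 < τ ≤ 1, 1/τ = α + 1/p, and f : Ω₀ → ℝ^{L−1} with f = Σ_{Ω∈𝒯} ψ_Ω, the equivalence |f|_{B̃_τ^{α,1}(𝒯)} ∼ N_τ(f,𝒯) holds with constants of equivalence depending only on α, τ, ρ and not on the dimension n of the domain. -/

import Mathlib

open MeasureTheory
open scoped ENNReal

/-- The mean `E⃗_Ω` of `f` over `Ω`. -/
noncomputable def cellMean {n d : ℕ} (f : (Fin n → ℝ) → EuclideanSpace ℝ (Fin d))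
    (Ω : Set (Fin n → ℝ)) : EuclideanSpace ℝ (Fin d) := ⨍ x in Ω, f x

/-- The `τ`-th power of the averaged-modulus Besov semi-norm
`|f|_{B̃_τ^{α,1}(𝒯)} = (Σ_{Ω∈𝒯} (|Ω|^{-α} w₁(f,Ω)_τ)^τ)^{1/τ}`, where
`w₁(f,Ω)_τ^τ = ∫_Ω ‖f - E⃗_Ω‖_{ℓ₂}^τ`; node `(l,j)` is the `j`-th cell at level `l`. -/
noncomputable def besovTildeTau {n d : ℕ} (α τ : ℝ)
    (f : (Fin n → ℝ) → EuclideanSpace ℝ (Fin d))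
    (cells : ℕ → ℕ → Set (Fin n → ℝ)) : ℝ≥0∞ :=
  ∑' (l : ℕ) (j : ℕ), volume (cells l j) ^ (-(α * τ)) *
    ∫⁻ x in cells l j, (‖f x - cellMean f (cells l j)‖₊ : ℝ≥0∞) ^ τ

/-- The `τ`-th power of the tree sparsity `N_τ(f,𝒯) = (Σ_{Ω'≠Ω₀} ‖ψ_{Ω'}‖_p^τ)^{1/τ}`, where
`‖ψ_{Ω'}‖_p^τ = ‖E⃗_{Ω'} - E⃗_Ω‖_{ℓ₂}^τ |Ω'|^{τ/p}` (`Ω` the parent of `Ω'`); the cells at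
level `l+1` with index `j` have parent `(l, j/2)`. -/
noncomputable def sparsityTau {n d : ℕ} (τ p : ℝ)
    (f : (Fin n → ℝ) → EuclideanSpace ℝ (Fin d))
    (cells : ℕ → ℕ → Set (Fin n → ℝ)) : ℝ≥0∞ :=
  ∑' (l : ℕ) (j : ℕ),
    (‖cellMean f (cells (l + 1) j) - cellMean f (cells l (j / 2))‖₊ : ℝ≥0∞) ^ τ *
      volume (cells (l + 1) j) ^ (τ / p)

/-- The piecewise-constant wavelet of the node `(l, j)`:
`ψ_{Ω₀} = 1_{Ω₀} E⃗_{Ω₀}` at the root, and `ψ_{Ω'} = 1_{Ω'}(E⃗_{Ω'} - E⃗_Ω)` for a child `Ω'`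
of `Ω`. -/
noncomputable def treeWavelet {n d : ℕ} (f : (Fin n → ℝ) → EuclideanSpace ℝ (Fin d))
    (cells : ℕ → ℕ → Set (Fin n → ℝ)) :
    ℕ → ℕ → (Fin n → ℝ) → EuclideanSpace ℝ (Fin d)
  | 0, j => (cells 0 j).indicator fun _ => cellMean f (cells 0 j)
  | (l + 1), j => (cells (l + 1) j).indicator
      fun _ => cellMean f (cells (l + 1) j) - cellMean f (cells l (j / 2))


private lemma rpow_sum_le_sum_rpow' {ι : Type*} {τ : ℝ} (hτ0 : 0 < τ) (hτ1 : τ ≤ 1)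
    (F : Finset ι) (a : ι → ℝ≥0∞) : (∑ i ∈ F, a i) ^ τ ≤ ∑ i ∈ F, a i ^ τ := by
  classical
  induction F using Finset.induction_on with
  | empty => simp [ENNReal.zero_rpow_of_pos hτ0]
  | insert _ _ h ih =>
      rw [Finset.sum_insert h, Finset.sum_insert h]
      exact le_trans (ENNReal.rpow_add_le_add_rpow _ _ hτ0.le hτ1) (by gcongr)

private lemma rpow_tsum_le_tsum_rpow' {ι : Type*} {τ : ℝ} (hτ0 : 0 < τ) (hτ1 : τ ≤ 1)
    (a : ι → ℝ≥0∞) : (∑' i, a i) ^ τ ≤ ∑' i, a i ^ τ := by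
  have h1 : (∑' i, a i) ≤ (∑' i, a i ^ τ) ^ (1 / τ) := by
    rw [ENNReal.tsum_eq_iSup_sum]
    apply iSup_le; intro F
    rw [← ENNReal.rpow_le_rpow_iff hτ0, ← ENNReal.rpow_mul, one_div,
      inv_mul_cancel₀ hτ0.ne', ENNReal.rpow_one]
    exact (rpow_sum_le_sum_rpow' hτ0 hτ1 F a).trans (ENNReal.sum_le_tsum F)
  calc (∑' i, a i) ^ τ ≤ (((∑' i, a i ^ τ) ^ (1 / τ)) : ℝ≥0∞) ^ τ :=
        ENNReal.rpow_le_rpow h1 hτ0.le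
    _ = ∑' i, a i ^ τ := by
        rw [← ENNReal.rpow_mul, one_div, inv_mul_cancel₀ hτ0.ne', ENNReal.rpow_one]

private lemma nnnorm_hasSum_le' {ι : Type*} {E : Type*} [NormedAddCommGroup E]
    {g : ι → E} {s : E} (h : HasSum g s) : (‖s‖₊ : ℝ≥0∞) ≤ ∑' i, (‖g i‖₊ : ℝ≥0∞) := by
  by_cases htop : ∑' i, (‖g i‖₊ : ℝ≥0∞) = ⊤
  · simp [htop]
  · have hsumm : Summable fun i => ‖g i‖₊ := ENNReal.tsum_coe_ne_top_iff_summable.mp htop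
    have h2 := nnnorm_tsum_le hsumm
    rw [h.tsum_eq] at h2
    rw [← ENNReal.coe_tsum hsumm]
    exact_mod_cast h2

private lemma inv_le_mul_inv' {X Y c : ℝ≥0∞} (hc0 : c ≠ 0) (hct : c ≠ ⊤) (h : X ≤ c * Y) :
    Y⁻¹ ≤ c * X⁻¹ := by
  rcases eq_or_ne X 0 with rfl | hX
  · simp [ENNReal.mul_top hc0]
  · have h2 : X / c ≤ Y := (ENNReal.div_le_iff_le_mul (Or.inl hc0) (Or.inl hct)).mpr
      (h.trans_eq (mul_comm c Y))
    calc Y⁻¹ ≤ (X / c)⁻¹ := ENNReal.inv_le_inv.mpr h2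
      _ = c * X⁻¹ := by
          rw [div_eq_mul_inv, ENNReal.mul_inv (Or.inl hX) (Or.inr (ENNReal.inv_ne_zero.mpr hct)), inv_inv, mul_comm]

private lemma rpow_neg_mul_self' {V : ℝ≥0∞} (hV : V ≠ ⊤) {s : ℝ} (hs : s < 1) :
    V ^ (-s) * V = V ^ (1 - s) := by
  rcases eq_or_ne V 0 with rfl | h0
  · simp [ENNReal.zero_rpow_of_pos (by linarith : (0:ℝ) < 1 - s)]
  · calc V ^ (-s) * V = V ^ (-s) * V ^ (1 : ℝ) := by rw [ENNReal.rpow_one]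
      _ = V ^ (-s + 1) := (ENNReal.rpow_add _ _ h0 hV).symm
      _ = V ^ (1 - s) := by ring_nf
-- defs from the statement file
section TreeAux
variable {n d : ℕ} {cells : ℕ → ℕ → Set (Fin n → ℝ)}

private lemma child_subset' (hcup : ∀ l j, cells (l + 1) (2 * j) ∪ cells (l + 1) (2 * j + 1) = cells l j)
    (l j : ℕ) : cells (l + 1) j ⊆ cells l (j / 2) := by
  obtain ⟨m, rfl | rfl⟩ : ∃ m, j = 2 * m ∨ j = 2 * m + 1 := ⟨j / 2, by omega⟩
  · rw [show 2 * m / 2 = m by omega, ← hcup l m]; exact Set.subset_union_left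
  · rw [show (2 * m + 1) / 2 = m by omega, ← hcup l m]; exact Set.subset_union_right

private lemma ancestor_subset' (hcup : ∀ l j, cells (l + 1) (2 * j) ∪ cells (l + 1) (2 * j + 1) = cells l j)
    (i l j : ℕ) : cells (l + i) j ⊆ cells l (j / 2 ^ i) := by
  induction i generalizing l j with
  | zero => simpa using Set.Subset.rfl
  | succ i ih =>
      rw [show l + (i + 1) = (l + 1) + i by omega]
      refine (ih (l + 1) j).trans ?_
      rw [show j / 2 ^ (i + 1) = j / 2 ^ i / 2 by rw [Nat.div_div_eq_div_mul, pow_succ]]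
      exact child_subset' hcup l _

private lemma level_disjoint' (hroot : ∀ j, j ≠ 0 → cells 0 j = ∅)
    (hcup : ∀ l j, cells (l + 1) (2 * j) ∪ cells (l + 1) (2 * j + 1) = cells l j)
    (hdisj : ∀ l j, Disjoint (cells (l + 1) (2 * j)) (cells (l + 1) (2 * j + 1))) :
    ∀ l j k, j ≠ k → Disjoint (cells l j) (cells l k) := by
  intro l
  induction l with
  | zero =>
      intro j k hjk
      rcases Nat.eq_zero_or_pos j with rfl | hj
      · rw [hroot k (Ne.symm hjk)]; exact Set.disjoint_empty _
      · rw [hroot j (by omega)]; exact Set.empty_disjoint _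
  | succ l ih =>
      intro j k hjk
      by_cases h : j / 2 = k / 2
      · have hcases : (∃ m, j = 2 * m ∧ k = 2 * m + 1) ∨ (∃ m, k = 2 * m ∧ j = 2 * m + 1) := by
          by_cases hj : j % 2 = 0
          · exact Or.inl ⟨j / 2, by omega⟩
          · exact Or.inr ⟨j / 2, by omega⟩
        rcases hcases with ⟨m, rfl, rfl⟩ | ⟨m, rfl, rfl⟩
        · exact hdisj l m
        · exact (hdisj l m).symm
      · exact Set.disjoint_of_subset (child_subset' hcup l j) (child_subset' hcup l k)
          (ih (j / 2) (k / 2) h)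

private lemma subset_root' (hroot : ∀ j, j ≠ 0 → cells 0 j = ∅)
    (hcup : ∀ l j, cells (l + 1) (2 * j) ∪ cells (l + 1) (2 * j + 1) = cells l j)
    (l j : ℕ) : cells l j ⊆ cells 0 0 := by
  have h := ancestor_subset' hcup l 0 j
  rw [zero_add] at h
  rcases eq_or_ne (j / 2 ^ l) 0 with h0 | h0
  · rwa [h0] at h
  · rw [hroot _ h0] at h
    intro x hx; exact absurd (h hx) (Set.notMem_empty x)

end TreeAux

section WaveletAux
variable {n d : ℕ} {cells : ℕ → ℕ → Set (Fin n → ℝ)}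
  {f : (Fin n → ℝ) → EuclideanSpace ℝ (Fin d)}

private lemma wavelet_zero' (f : (Fin n → ℝ) → EuclideanSpace ℝ (Fin d)) (m k : ℕ)
    (x : Fin n → ℝ) (hx : x ∉ cells m k) : treeWavelet f cells m k x = 0 := by
  cases m <;> simp [treeWavelet, Set.indicator_of_notMem hx]

private lemma partial_sum_eq'
    (hcup : ∀ l j, cells (l + 1) (2 * j) ∪ cells (l + 1) (2 * j + 1) = cells l j)
    (f : (Fin n → ℝ) → EuclideanSpace ℝ (Fin d)) :
    ∀ l j (x : Fin n → ℝ), x ∈ cells l j →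
      (∑ m ∈ Finset.range (l + 1), treeWavelet f cells m (j / 2 ^ (l - m)) x)
        = cellMean f (cells l j) := by
  intro l
  induction l with
  | zero =>
      intro j x hx
      simp [treeWavelet, Set.indicator_of_mem hx]
  | succ l ih =>
      intro j x hx
      rw [Finset.sum_range_succ]
      have hx' : x ∈ cells l (j / 2) := child_subset' hcup l j hx
      have hsum : (∑ m ∈ Finset.range (l + 1), treeWavelet f cells m (j / 2 ^ (l + 1 - m)) x)
          = cellMean f (cells l (j / 2)) := by
        rw [← ih (j / 2) x hx']
        apply Finset.sum_congr rfl
        intro m hm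
        have hml : m ≤ l := Nat.lt_succ_iff.mp (Finset.mem_range.mp hm)
        apply congrArg (fun k => treeWavelet f cells m k x)
        rw [Nat.div_div_eq_div_mul]
        congr 1
        rw [show l + 1 - m = (l - m) + 1 by omega, pow_succ]
        ring
      rw [hsum, show l + 1 - (l + 1) = 0 by omega, pow_zero, Nat.div_one]
      have hw : treeWavelet f cells (l + 1) j x
          = cellMean f (cells (l + 1) j) - cellMean f (cells l (j / 2)) := by
        simp [treeWavelet, Set.indicator_of_mem hx]
      rw [hw]; abel

private lemma head_hasSum' (hroot : ∀ j, j ≠ 0 → cells 0 j = ∅)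
    (hcup : ∀ l j, cells (l + 1) (2 * j) ∪ cells (l + 1) (2 * j + 1) = cells l j)
    (hdisj : ∀ l j, Disjoint (cells (l + 1) (2 * j)) (cells (l + 1) (2 * j + 1)))
    (f : (Fin n → ℝ) → EuclideanSpace ℝ (Fin d)) (l j : ℕ) (x : Fin n → ℝ)
    (hx : x ∈ cells l j) :
    HasSum (fun q : ℕ × ℕ => if q.1 ≤ l then treeWavelet f cells q.1 q.2 x else 0)
      (cellMean f (cells l j)) := by
  classical
  set F : Finset (ℕ × ℕ) := (Finset.range (l + 1)).image (fun m => (m, j / 2 ^ (l - m))) with hF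
  have hmem_anc : ∀ m, m ≤ l → x ∈ cells m (j / 2 ^ (l - m)) := by
    intro m hm
    have h := ancestor_subset' hcup (l - m) m j
    rw [show m + (l - m) = l by omega] at h
    exact h hx
  have hzero : ∀ q : ℕ × ℕ, q ∉ F →
      (if q.1 ≤ l then treeWavelet f cells q.1 q.2 x else 0) = 0 := by
    rintro ⟨m, k⟩ hq
    by_cases hm : m ≤ l
    · rw [if_pos hm]
      apply wavelet_zero'
      intro hxk
      have hne : k ≠ j / 2 ^ (l - m) := by
        intro hk
        exact hq (Finset.mem_image.mpr ⟨m, Finset.mem_range.mpr (by omega), by rw [hk]⟩)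
      exact (Set.disjoint_left.mp (level_disjoint' hroot hcup hdisj m k _ hne) hxk)
        (hmem_anc m hm)
    · rw [if_neg hm]
  have hsum_eq : (∑ q ∈ F, (if q.1 ≤ l then treeWavelet f cells q.1 q.2 x else 0))
      = cellMean f (cells l j) := by
    rw [hF, Finset.sum_image (by intro a _ b _ h; simpa using congrArg Prod.fst h)]
    rw [← partial_sum_eq' hcup f l j x hx]
    apply Finset.sum_congr rfl
    intro m hm
    rw [if_pos (Nat.lt_succ_iff.mp (Finset.mem_range.mp hm))]
  have h := hasSum_sum_of_ne_finset_zero (L := SummationFilter.unconditional _) hzero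
  rwa [hsum_eq] at h

private lemma tail_hasSum' (hroot : ∀ j, j ≠ 0 → cells 0 j = ∅)
    (hcup : ∀ l j, cells (l + 1) (2 * j) ∪ cells (l + 1) (2 * j + 1) = cells l j)
    (hdisj : ∀ l j, Disjoint (cells (l + 1) (2 * j)) (cells (l + 1) (2 * j + 1)))
    (f : (Fin n → ℝ) → EuclideanSpace ℝ (Fin d))
    (hsum : ∀ x ∈ cells 0 0, HasSum (fun q : ℕ × ℕ => treeWavelet f cells q.1 q.2 x) (f x))
    (l j : ℕ) (x : Fin n → ℝ) (hx : x ∈ cells l j) :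
    HasSum (fun q : ℕ × ℕ => if l < q.1 then treeWavelet f cells q.1 q.2 x else 0)
      (f x - cellMean f (cells l j)) := by
  have hx0 : x ∈ cells 0 0 := subset_root' hroot hcup l j hx
  have h1 := (hsum x hx0).sub (head_hasSum' hroot hcup hdisj f l j x hx)
  have hfe : (fun q : ℕ × ℕ => if l < q.1 then treeWavelet f cells q.1 q.2 x else 0)
      = fun q : ℕ × ℕ => treeWavelet f cells q.1 q.2 x -
          (if q.1 ≤ l then treeWavelet f cells q.1 q.2 x else 0) := by
    funext q
    by_cases h : q.1 ≤ l
    · rw [if_neg (by omega), if_pos h, sub_self]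
    · rw [if_pos (by omega), if_neg h, sub_zero]
  rw [hfe]
  exact h1

end WaveletAux

noncomputable def ampTau {n d : ℕ} (f : (Fin n → ℝ) → EuclideanSpace ℝ (Fin d))
    (cells : ℕ → ℕ → Set (Fin n → ℝ)) (τ : ℝ) : ℕ → ℕ → ℝ≥0∞
  | 0, k => (‖cellMean f (cells 0 k)‖₊ : ℝ≥0∞) ^ τ
  | (m + 1), k => (‖cellMean f (cells (m + 1) k) - cellMean f (cells m (k / 2))‖₊ : ℝ≥0∞) ^ τ

private lemma norm_wavelet_rpow' {n d : ℕ} {cells : ℕ → ℕ → Set (Fin n → ℝ)}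
    (f : (Fin n → ℝ) → EuclideanSpace ℝ (Fin d)) {τ : ℝ} (hτ0 : 0 < τ) (m k : ℕ)
    (x : Fin n → ℝ) :
    (‖treeWavelet f cells m k x‖₊ : ℝ≥0∞) ^ τ
      = (cells m k).indicator (fun _ => ampTau f cells τ m k) x := by
  by_cases hx : x ∈ cells m k
  · rw [Set.indicator_of_mem hx]
    cases m <;> simp [treeWavelet, ampTau, Set.indicator_of_mem hx]
  · rw [Set.indicator_of_notMem hx, wavelet_zero' f m k x hx]
    simp [ENNReal.zero_rpow_of_pos hτ0]

private lemma vol_decay' {n : ℕ} {cells : ℕ → ℕ → Set (Fin n → ℝ)} {ρ : ℝ} (hρ : 0 ≤ ρ)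
    (hdecay : ∀ l j, volume (cells (l + 1) j) ≤ ENNReal.ofReal ρ * volume (cells l (j / 2))) :
    ∀ i l j, volume (cells (l + i) j) ≤ ENNReal.ofReal (ρ ^ i) * volume (cells l (j / 2 ^ i)) := by
  intro i
  induction i with
  | zero => intro l j; simp
  | succ i ih =>
      intro l j
      calc volume (cells (l + (i + 1)) j) = volume (cells ((l + 1) + i) j) := by
            rw [show l + (i + 1) = (l + 1) + i by omega]
        _ ≤ ENNReal.ofReal (ρ ^ i) * volume (cells (l + 1) (j / 2 ^ i)) := ih (l + 1) j
        _ ≤ ENNReal.ofReal (ρ ^ i) * (ENNReal.ofReal ρ * volume (cells l (j / 2 ^ i / 2))) := by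
            gcongr; exact hdecay l (j / 2 ^ i)
        _ = ENNReal.ofReal (ρ ^ (i + 1)) * volume (cells l (j / 2 ^ (i + 1))) := by
            rw [show j / 2 ^ i / 2 = j / 2 ^ (i + 1) by rw [Nat.div_div_eq_div_mul, pow_succ],
              show ρ ^ (i + 1) = ρ ^ i * ρ from pow_succ ρ i,
              ENNReal.ofReal_mul (by positivity), mul_assoc]

private lemma dir1' {n d : ℕ} {cells : ℕ → ℕ → Set (Fin n → ℝ)}
    {f : (Fin n → ℝ) → EuclideanSpace ℝ (Fin d)}
    {ρ α p τ : ℝ} (hρ0 : 0 < ρ) (hρ1 : ρ < 1) (hα : 0 < α) (hp : 0 < p)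
    (hτ0 : 0 < τ) (hτ1 : τ ≤ 1) (hkey : τ / p = 1 - α * τ)
    (hmeas : ∀ l j, MeasurableSet (cells l j))
    (hroot : ∀ j, j ≠ 0 → cells 0 j = ∅)
    (hcup : ∀ l j, cells (l + 1) (2 * j) ∪ cells (l + 1) (2 * j + 1) = cells l j)
    (hdisj : ∀ l j, Disjoint (cells (l + 1) (2 * j)) (cells (l + 1) (2 * j + 1)))
    (hdecay : ∀ l j, volume (cells (l + 1) j) ≤ ENNReal.ofReal ρ * volume (cells l (j / 2)))
    (hfin : volume (cells 0 0) < ⊤)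
    (hsum : ∀ x ∈ cells 0 0, HasSum (fun q : ℕ × ℕ => treeWavelet f cells q.1 q.2 x) (f x)) :
    besovTildeTau α τ f cells ≤
      (ENNReal.ofReal (ρ ^ (α * τ)) * (1 - ENNReal.ofReal (ρ ^ (α * τ)))⁻¹)
        * sparsityTau τ p f cells := by
  have hs0 : 0 < α * τ := mul_pos hα hτ0
  have hs1 : α * τ < 1 := by
    have h2 : 0 < τ / p := div_pos hτ0 hp
    linarith [hkey]
  set lamr : ℝ := ρ ^ (α * τ) with hlamr
  have hlam0 : 0 < lamr := Real.rpow_pos_of_pos hρ0 _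
  have hlam1 : lamr < 1 := Real.rpow_lt_one hρ0.le hρ1 hs0
  set L : ℝ≥0∞ := ENNReal.ofReal lamr with hLdef
  have hL0 : L ≠ 0 := by simp [hLdef, ENNReal.ofReal_eq_zero, hlam0, not_le]
  have hLt : L ≠ ⊤ := ENNReal.ofReal_ne_top
  set K₁ : ℝ≥0∞ := L * (1 - L)⁻¹ with hK₁
  have hVfin : ∀ l j, volume (cells l j) ≠ ⊤ := fun l j =>
    ((measure_mono (subset_root' hroot hcup l j)).trans_lt hfin).ne
  -- Claim 1 : pointwise/integral wavelet bound on each cell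
  have claim1 : ∀ l j, (∫⁻ x in cells l j, (‖f x - cellMean f (cells l j)‖₊ : ℝ≥0∞) ^ τ)
      ≤ ∑' q : ℕ × ℕ, (if l < q.1 then
          ampTau f cells τ q.1 q.2 * volume (cells q.1 q.2 ∩ cells l j) else 0) := by
    intro l j
    have hmeasrhs : Measurable fun x => ∑' q : ℕ × ℕ, (if l < q.1 then
        (cells q.1 q.2).indicator (fun _ => ampTau f cells τ q.1 q.2) x else 0) := by
      apply Measurable.ennreal_tsum
      intro q
      by_cases h : l < q.1
      · simp only [if_pos h]; exact measurable_const.indicator (hmeas q.1 q.2)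
      · simp only [if_neg h]; exact measurable_const
    calc (∫⁻ x in cells l j, (‖f x - cellMean f (cells l j)‖₊ : ℝ≥0∞) ^ τ)
        ≤ ∫⁻ x in cells l j, ∑' q : ℕ × ℕ, (if l < q.1 then
            (cells q.1 q.2).indicator (fun _ => ampTau f cells τ q.1 q.2) x else 0) := by
          apply setLIntegral_mono hmeasrhs
          intro x hx
          have htail := tail_hasSum' hroot hcup hdisj f hsum l j x hx
          have h1 : (‖f x - cellMean f (cells l j)‖₊ : ℝ≥0∞)
              ≤ ∑' q : ℕ × ℕ, (‖if l < q.1 then treeWavelet f cells q.1 q.2 x else 0‖₊ : ℝ≥0∞) :=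
            nnnorm_hasSum_le' htail
          calc (‖f x - cellMean f (cells l j)‖₊ : ℝ≥0∞) ^ τ
              ≤ (∑' q : ℕ × ℕ,
                  (‖if l < q.1 then treeWavelet f cells q.1 q.2 x else 0‖₊ : ℝ≥0∞)) ^ τ :=
                ENNReal.rpow_le_rpow h1 hτ0.le
            _ ≤ ∑' q : ℕ × ℕ,
                  (‖if l < q.1 then treeWavelet f cells q.1 q.2 x else 0‖₊ : ℝ≥0∞) ^ τ :=
                rpow_tsum_le_tsum_rpow' hτ0 hτ1 _
            _ = _ := by
                apply tsum_congr; intro q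
                by_cases h : l < q.1
                · rw [if_pos h, if_pos h, norm_wavelet_rpow' f hτ0]
                · rw [if_neg h, if_neg h]
                  simp [ENNReal.zero_rpow_of_pos hτ0]
      _ = ∑' q : ℕ × ℕ, ∫⁻ x in cells l j, (if l < q.1 then
            (cells q.1 q.2).indicator (fun _ => ampTau f cells τ q.1 q.2) x else 0) := by
          apply lintegral_tsum
          intro q
          by_cases h : l < q.1
          · simp only [if_pos h]
            exact (measurable_const.indicator (hmeas q.1 q.2)).aemeasurable
          · simp only [if_neg h]; exact aemeasurable_const
      _ = _ := by
          apply tsum_congr; intro q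
          by_cases h : l < q.1
          · simp only [if_pos h]
            rw [lintegral_indicator_const (hmeas q.1 q.2),
              Measure.restrict_apply (hmeas q.1 q.2)]
          · simp only [if_neg h]; simp
  -- Claim 3 : fixed wavelet, summed over ancestors
  have claim3 : ∀ m k, (∑' (l : ℕ) (j : ℕ), volume (cells l j) ^ (-(α * τ)) *
        (if l < m then ampTau f cells τ m k * volume (cells m k ∩ cells l j) else 0))
      ≤ K₁ * (ampTau f cells τ m k * volume (cells m k) ^ (1 - α * τ)) := by
    intro m k
    have hstep : ∀ l, (∑' j : ℕ, volume (cells l j) ^ (-(α * τ)) *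
          (if l < m then ampTau f cells τ m k * volume (cells m k ∩ cells l j) else 0))
        ≤ (if l < m then L ^ (m - l) else 0) *
            (ampTau f cells τ m k * volume (cells m k) ^ (1 - α * τ)) := by
      intro l
      by_cases hlm : l < m
      · simp only [if_pos hlm]
        have hsub : cells m k ⊆ cells l (k / 2 ^ (m - l)) := by
          have h := ancestor_subset' hcup (m - l) l k
          rwa [show l + (m - l) = m by omega] at h
        have hsingle : (∑' j : ℕ, volume (cells l j) ^ (-(α * τ)) *
              (ampTau f cells τ m k * volume (cells m k ∩ cells l j)))
            = volume (cells l (k / 2 ^ (m - l))) ^ (-(α * τ)) *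
              (ampTau f cells τ m k * volume (cells m k ∩ cells l (k / 2 ^ (m - l)))) := by
          apply tsum_eq_single
          intro j hja
          have hd := level_disjoint' hroot hcup hdisj l (k / 2 ^ (m - l)) j (Ne.symm hja)
          have hnull : cells m k ∩ cells l j = ∅ := by
            rw [Set.eq_empty_iff_forall_notMem]
            rintro y ⟨hy1, hy2⟩
            exact Set.disjoint_left.mp hd (hsub hy1) hy2
          rw [hnull]
          simp
        rw [hsingle]
        have hdec : volume (cells m k)
            ≤ ENNReal.ofReal (ρ ^ (m - l)) * volume (cells l (k / 2 ^ (m - l))) := by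
          have h := vol_decay' hρ0.le hdecay (m - l) l k
          rwa [show l + (m - l) = m by omega] at h
        have hpow : volume (cells l (k / 2 ^ (m - l))) ^ (-(α * τ))
            ≤ L ^ (m - l) * volume (cells m k) ^ (-(α * τ)) := by
          rw [ENNReal.rpow_neg, ENNReal.rpow_neg]
          have h1 : volume (cells m k) ^ (α * τ)
              ≤ (ENNReal.ofReal (ρ ^ (m - l)) * volume (cells l (k / 2 ^ (m - l)))) ^ (α * τ) :=
            ENNReal.rpow_le_rpow hdec hs0.le
          rw [ENNReal.mul_rpow_of_ne_top ENNReal.ofReal_ne_top (hVfin l _)] at h1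
          have h2 : ENNReal.ofReal (ρ ^ (m - l)) ^ (α * τ) = L ^ (m - l) := by
            rw [ENNReal.ofReal_rpow_of_nonneg (by positivity) hs0.le, hLdef,
              ← ENNReal.ofReal_pow hlam0.le]
            congr 1
            rw [hlamr, ← Real.rpow_natCast ρ (m - l), ← Real.rpow_mul hρ0.le,
              mul_comm ((m - l : ℕ) : ℝ), Real.rpow_mul hρ0.le, Real.rpow_natCast]
          rw [h2] at h1
          exact inv_le_mul_inv' (pow_ne_zero _ hL0) (ENNReal.pow_ne_top hLt) h1
        calc volume (cells l (k / 2 ^ (m - l))) ^ (-(α * τ)) *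
              (ampTau f cells τ m k * volume (cells m k ∩ cells l (k / 2 ^ (m - l))))
            ≤ (L ^ (m - l) * volume (cells m k) ^ (-(α * τ))) *
              (ampTau f cells τ m k * volume (cells m k)) := by
              exact mul_le_mul' hpow
                (mul_le_mul_right (measure_mono Set.inter_subset_left) _)
          _ = L ^ (m - l) * (ampTau f cells τ m k *
                (volume (cells m k) ^ (-(α * τ)) * volume (cells m k))) := by ring
          _ = L ^ (m - l) * (ampTau f cells τ m k * volume (cells m k) ^ (1 - α * τ)) := by
              rw [rpow_neg_mul_self' (hVfin m k) hs1]
      · simp [hlm]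
    calc (∑' (l : ℕ) (j : ℕ), volume (cells l j) ^ (-(α * τ)) *
          (if l < m then ampTau f cells τ m k * volume (cells m k ∩ cells l j) else 0))
        ≤ ∑' l : ℕ, (if l < m then L ^ (m - l) else 0) *
            (ampTau f cells τ m k * volume (cells m k) ^ (1 - α * τ)) :=
          ENNReal.tsum_le_tsum hstep
      _ = (∑' l : ℕ, if l < m then L ^ (m - l) else 0) *
            (ampTau f cells τ m k * volume (cells m k) ^ (1 - α * τ)) :=
          ENNReal.tsum_mul_right
      _ ≤ K₁ * (ampTau f cells τ m k * volume (cells m k) ^ (1 - α * τ)) := by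
          apply mul_le_mul_left
          have e1 : (∑' l : ℕ, if l < m then L ^ (m - l) else 0)
              = ∑ l ∈ Finset.range m, L ^ (m - l) := by
            rw [tsum_eq_sum (s := Finset.range m)
              (by intro l hl; rw [if_neg (by simpa using hl)])]
            exact Finset.sum_congr rfl fun l hl => if_pos (Finset.mem_range.mp hl)
          rw [e1]
          have e2 : (∑ l ∈ Finset.range m, L ^ (m - l)) = ∑ i ∈ Finset.range m, L ^ (i + 1) := by
            conv_rhs => rw [← Finset.sum_range_reflect (fun i => L ^ (i + 1)) m]
            apply Finset.sum_congr rfl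
            intro l hl
            have := Finset.mem_range.mp hl
            congr 1
            omega
          rw [e2]
          calc (∑ i ∈ Finset.range m, L ^ (i + 1)) ≤ ∑' i : ℕ, L ^ (i + 1) :=
              ENNReal.sum_le_tsum _
            _ = L * ∑' i : ℕ, L ^ i := by
                rw [← ENNReal.tsum_mul_left]
                exact tsum_congr fun i => pow_succ' L i
            _ = K₁ := by rw [ENNReal.tsum_geometric, hK₁]
  -- assemble
  calc besovTildeTau α τ f cells
      ≤ ∑' (l : ℕ) (j : ℕ), volume (cells l j) ^ (-(α * τ)) *
          ∑' q : ℕ × ℕ, (if l < q.1 then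
            ampTau f cells τ q.1 q.2 * volume (cells q.1 q.2 ∩ cells l j) else 0) := by
        rw [besovTildeTau]
        exact ENNReal.tsum_le_tsum fun l => ENNReal.tsum_le_tsum fun j =>
          mul_le_mul_right (claim1 l j) _
    _ = ∑' (l : ℕ) (j : ℕ) (q : ℕ × ℕ), volume (cells l j) ^ (-(α * τ)) *
          (if l < q.1 then ampTau f cells τ q.1 q.2 * volume (cells q.1 q.2 ∩ cells l j)
            else 0) := by
        exact tsum_congr fun l => tsum_congr fun j => (ENNReal.tsum_mul_left).symm
    _ = ∑' (q : ℕ × ℕ) (l : ℕ) (j : ℕ), volume (cells l j) ^ (-(α * τ)) *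
          (if l < q.1 then ampTau f cells τ q.1 q.2 * volume (cells q.1 q.2 ∩ cells l j)
            else 0) := by
        rw [show (∑' (l : ℕ) (j : ℕ) (q : ℕ × ℕ), volume (cells l j) ^ (-(α * τ)) *
          (if l < q.1 then ampTau f cells τ q.1 q.2 * volume (cells q.1 q.2 ∩ cells l j)
            else 0)) = ∑' (l : ℕ) (q : ℕ × ℕ) (j : ℕ), volume (cells l j) ^ (-(α * τ)) *
          (if l < q.1 then ampTau f cells τ q.1 q.2 * volume (cells q.1 q.2 ∩ cells l j)
            else 0) from tsum_congr fun l => ENNReal.tsum_comm]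
        exact ENNReal.tsum_comm
    _ = ∑' (m : ℕ) (k : ℕ) , ∑' (l : ℕ) (j : ℕ), volume (cells l j) ^ (-(α * τ)) *
          (if l < m then ampTau f cells τ m k * volume (cells m k ∩ cells l j) else 0) :=
        ENNReal.tsum_prod (f := fun m k => ∑' (l : ℕ) (j : ℕ),
          volume (cells l j) ^ (-(α * τ)) *
            (if l < m then ampTau f cells τ m k * volume (cells m k ∩ cells l j) else 0))
    _ ≤ ∑' (m : ℕ) (k : ℕ), (if m = 0 then 0 else
          K₁ * (ampTau f cells τ m k * volume (cells m k) ^ (1 - α * τ))) := by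
        refine ENNReal.tsum_le_tsum fun m => ENNReal.tsum_le_tsum fun k => ?_
        cases m with
        | zero => simp
        | succ m => rw [if_neg (Nat.succ_ne_zero m)]; exact claim3 (m + 1) k
    _ = K₁ * sparsityTau τ p f cells := by
        rw [tsum_eq_zero_add' ENNReal.summable]
        simp only [reduceIte, Nat.succ_ne_zero, ite_false, tsum_zero, zero_add]
        rw [sparsityTau, ← ENNReal.tsum_mul_left]
        refine tsum_congr fun m => ?_
        rw [← ENNReal.tsum_mul_left]
        refine tsum_congr fun k => ?_
        rw [hkey]
        simp [ampTau]

set_option maxHeartbeats 2000000 in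
private lemma dir2' {n d : ℕ} {cells : ℕ → ℕ → Set (Fin n → ℝ)}
    {f : (Fin n → ℝ) → EuclideanSpace ℝ (Fin d)}
    {ρ α p τ : ℝ} (hρ0 : 0 < ρ) (hρ1 : ρ < 1) (hα : 0 < α) (hp : 0 < p)
    (hτ0 : 0 < τ) (hτ1 : τ ≤ 1) (hkey : τ / p = 1 - α * τ)
    (hmeas : ∀ l j, MeasurableSet (cells l j))
    (hroot : ∀ j, j ≠ 0 → cells 0 j = ∅)
    (hcup : ∀ l j, cells (l + 1) (2 * j) ∪ cells (l + 1) (2 * j + 1) = cells l j)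
    (hdisj : ∀ l j, Disjoint (cells (l + 1) (2 * j)) (cells (l + 1) (2 * j + 1)))
    (hdecay : ∀ l j, volume (cells (l + 1) j) ≤ ENNReal.ofReal ρ * volume (cells l (j / 2)))
    (hfin : volume (cells 0 0) < ⊤)
    (hint : IntegrableOn f (cells 0 0)) :
    sparsityTau τ p f cells ≤
      (1 + 2 * ENNReal.ofReal ((1 - ρ) ^ (-(α * τ)))) * besovTildeTau α τ f cells := by
  have hs0 : 0 < α * τ := mul_pos hα hτ0
  have hs1 : α * τ < 1 := by
    have h2 : 0 < τ / p := div_pos hτ0 hp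
    linarith [hkey]
  set μ2 : ℝ≥0∞ := ENNReal.ofReal ((1 - ρ) ^ (-(α * τ))) with hμ2
  have hVfin : ∀ l j, volume (cells l j) ≠ ⊤ := fun l j =>
    ((measure_mono (subset_root' hroot hcup l j)).trans_lt hfin).ne
  -- a.e. measurability of the norm-power integrands on each cell
  have hAE : ∀ l j (c : EuclideanSpace ℝ (Fin d)),
      AEMeasurable (fun x => (‖f x - c‖₊ : ℝ≥0∞) ^ τ) (volume.restrict (cells l j)) := by
    intro l j c
    have h1 : AEStronglyMeasurable f (volume.restrict (cells l j)) :=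
      hint.aestronglyMeasurable.mono_measure
        (Measure.restrict_mono (subset_root' hroot hcup l j) le_rfl)
    exact ((h1.sub aestronglyMeasurable_const).enorm).pow aemeasurable_const
  -- per-node bound
  have hterm : ∀ l j,
      (‖cellMean f (cells (l + 1) j) - cellMean f (cells l (j / 2))‖₊ : ℝ≥0∞) ^ τ *
          volume (cells (l + 1) j) ^ (τ / p)
        ≤ volume (cells (l + 1) j) ^ (-(α * τ)) *
            (∫⁻ x in cells (l + 1) j, (‖f x - cellMean f (cells (l + 1) j)‖₊ : ℝ≥0∞) ^ τ)
          + μ2 * (volume (cells l (j / 2)) ^ (-(α * τ)) *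
            (∫⁻ x in cells l (j / 2), (‖f x - cellMean f (cells l (j / 2))‖₊ : ℝ≥0∞) ^ τ)) := by
    intro l j
    rcases eq_or_ne (volume (cells (l + 1) j)) 0 with hV0 | hV0
    · rw [hV0, ENNReal.zero_rpow_of_pos (div_pos hτ0 hp), mul_zero]
      exact zero_le
    · have hVt := hVfin (l + 1) j
      have hsplit : volume (cells (l + 1) j) ^ (τ / p)
          = volume (cells (l + 1) j) ^ (-(α * τ)) * volume (cells (l + 1) j) := by
        rw [hkey, ← rpow_neg_mul_self' hVt hs1]
      rw [hsplit, ← mul_assoc,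
        mul_comm ((‖cellMean f (cells (l + 1) j) - cellMean f (cells l (j / 2))‖₊ : ℝ≥0∞) ^ τ),
        mul_assoc]
      -- bound the constant times volume by the two integrals
      have hcV : (‖cellMean f (cells (l + 1) j) - cellMean f (cells l (j / 2))‖₊ : ℝ≥0∞) ^ τ *
            volume (cells (l + 1) j)
          ≤ (∫⁻ x in cells (l + 1) j, (‖f x - cellMean f (cells (l + 1) j)‖₊ : ℝ≥0∞) ^ τ)
            + (∫⁻ x in cells (l + 1) j, (‖f x - cellMean f (cells l (j / 2))‖₊ : ℝ≥0∞) ^ τ) := by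
        have h1 : (‖cellMean f (cells (l + 1) j) - cellMean f (cells l (j / 2))‖₊ : ℝ≥0∞) ^ τ *
              volume (cells (l + 1) j)
            = ∫⁻ _x in cells (l + 1) j,
                (‖cellMean f (cells (l + 1) j) - cellMean f (cells l (j / 2))‖₊ : ℝ≥0∞) ^ τ := by
          rw [setLIntegral_const]
        rw [h1]
        calc (∫⁻ _x in cells (l + 1) j,
              (‖cellMean f (cells (l + 1) j) - cellMean f (cells l (j / 2))‖₊ : ℝ≥0∞) ^ τ)
            ≤ ∫⁻ x in cells (l + 1) j,
                ((‖f x - cellMean f (cells (l + 1) j)‖₊ : ℝ≥0∞) ^ τ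
                  + (‖f x - cellMean f (cells l (j / 2))‖₊ : ℝ≥0∞) ^ τ) := by
              apply setLIntegral_mono_ae
                ((hAE (l + 1) j _).add (hAE (l + 1) j _))
              apply Filter.Eventually.of_forall
              intro x _hx
              have htri : (‖cellMean f (cells (l + 1) j) - cellMean f (cells l (j / 2))‖₊ : ℝ≥0∞)
                  ≤ (‖f x - cellMean f (cells (l + 1) j)‖₊ : ℝ≥0∞)
                    + (‖f x - cellMean f (cells l (j / 2))‖₊ : ℝ≥0∞) := by
                have heq : cellMean f (cells (l + 1) j) - cellMean f (cells l (j / 2))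
                    = (f x - cellMean f (cells l (j / 2))) - (f x - cellMean f (cells (l + 1) j)) := by
                  abel
                rw [heq]
                refine (ENNReal.coe_le_coe.mpr (nnnorm_sub_le _ _)).trans_eq ?_
                rw [ENNReal.coe_add, add_comm]
              calc (‖cellMean f (cells (l + 1) j) - cellMean f (cells l (j / 2))‖₊ : ℝ≥0∞) ^ τ
                  ≤ ((‖f x - cellMean f (cells (l + 1) j)‖₊ : ℝ≥0∞)
                      + (‖f x - cellMean f (cells l (j / 2))‖₊ : ℝ≥0∞)) ^ τ :=
                    ENNReal.rpow_le_rpow htri hτ0.le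
                _ ≤ _ := ENNReal.rpow_add_le_add_rpow _ _ hτ0.le hτ1
          _ = _ := lintegral_add_left' (hAE (l + 1) j _) _
      -- monotonicity of the parent integral
      have hB : (∫⁻ x in cells (l + 1) j, (‖f x - cellMean f (cells l (j / 2))‖₊ : ℝ≥0∞) ^ τ)
          ≤ ∫⁻ x in cells l (j / 2), (‖f x - cellMean f (cells l (j / 2))‖₊ : ℝ≥0∞) ^ τ :=
        lintegral_mono_set (child_subset' hcup l j)
      -- the volume-power comparison child vs parent
      have hpow2 : volume (cells (l + 1) j) ^ (-(α * τ))
          ≤ μ2 * volume (cells l (j / 2)) ^ (-(α * τ)) := by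
        have hup : volume (cells l (j / 2)) ≤ volume (cells (l + 1) j)
            + ENNReal.ofReal ρ * volume (cells l (j / 2)) := by
          obtain ⟨m, rfl | rfl⟩ : ∃ m, j = 2 * m ∨ j = 2 * m + 1 := ⟨j / 2, by omega⟩
          · rw [show 2 * m / 2 = m by omega]
            calc volume (cells l m)
                = volume (cells (l + 1) (2 * m) ∪ cells (l + 1) (2 * m + 1)) := by rw [hcup]
              _ = volume (cells (l + 1) (2 * m)) + volume (cells (l + 1) (2 * m + 1)) :=
                  measure_union (hdisj l m) (hmeas _ _)
              _ ≤ volume (cells (l + 1) (2 * m)) + ENNReal.ofReal ρ * volume (cells l m) := by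
                  gcongr
                  have h := hdecay l (2 * m + 1)
                  rwa [show (2 * m + 1) / 2 = m by omega] at h
          · rw [show (2 * m + 1) / 2 = m by omega]
            calc volume (cells l m)
                = volume (cells (l + 1) (2 * m) ∪ cells (l + 1) (2 * m + 1)) := by rw [hcup]
              _ = volume (cells (l + 1) (2 * m)) + volume (cells (l + 1) (2 * m + 1)) :=
                  measure_union (hdisj l m) (hmeas _ _)
              _ ≤ ENNReal.ofReal ρ * volume (cells l m) + volume (cells (l + 1) (2 * m + 1)) := by
                  gcongr
                  have h := hdecay l (2 * m)
                  rwa [show 2 * m / 2 = m by omega] at h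
              _ = volume (cells (l + 1) (2 * m + 1)) + ENNReal.ofReal ρ * volume (cells l m) := by
                  ring
        have hsib : ENNReal.ofReal (1 - ρ) * volume (cells l (j / 2))
            ≤ volume (cells (l + 1) j) := by
          have h1 : ENNReal.ofReal (1 - ρ) * volume (cells l (j / 2))
              = volume (cells l (j / 2)) - ENNReal.ofReal ρ * volume (cells l (j / 2)) := by
            rw [ENNReal.ofReal_sub 1 hρ0.le, ENNReal.ofReal_one,
              ENNReal.sub_mul (fun _ _ => hVfin l (j / 2)), one_mul]
          rw [h1]
          exact tsub_le_iff_right.mpr hup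
        rw [ENNReal.rpow_neg, ENNReal.rpow_neg]
        have h1 : (ENNReal.ofReal (1 - ρ) * volume (cells l (j / 2))) ^ (α * τ)
            ≤ volume (cells (l + 1) j) ^ (α * τ) := ENNReal.rpow_le_rpow hsib hs0.le
        rw [ENNReal.mul_rpow_of_ne_top ENNReal.ofReal_ne_top (hVfin l (j / 2))] at h1
        have h2 : (volume (cells (l + 1) j) ^ (α * τ))⁻¹
            ≤ (ENNReal.ofReal (1 - ρ) ^ (α * τ) * volume (cells l (j / 2)) ^ (α * τ))⁻¹ :=
          ENNReal.inv_le_inv.mpr h1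
        have hne0 : ENNReal.ofReal (1 - ρ) ^ (α * τ) ≠ 0 :=
          (ENNReal.rpow_pos (by simp [ENNReal.ofReal_pos]; linarith) ENNReal.ofReal_ne_top).ne'
        have hnet : ENNReal.ofReal (1 - ρ) ^ (α * τ) ≠ ⊤ :=
          ENNReal.rpow_ne_top_of_nonneg hs0.le ENNReal.ofReal_ne_top
        rw [ENNReal.mul_inv (Or.inl hne0) (Or.inl hnet)] at h2
        refine h2.trans_eq ?_
        congr 1
        rw [← ENNReal.rpow_neg, ENNReal.ofReal_rpow_of_pos (by linarith), hμ2]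
      -- combine
      calc volume (cells (l + 1) j) ^ (-(α * τ)) *
            ((‖cellMean f (cells (l + 1) j) - cellMean f (cells l (j / 2))‖₊ : ℝ≥0∞) ^ τ *
              volume (cells (l + 1) j))
          ≤ volume (cells (l + 1) j) ^ (-(α * τ)) *
            ((∫⁻ x in cells (l + 1) j, (‖f x - cellMean f (cells (l + 1) j)‖₊ : ℝ≥0∞) ^ τ)
              + (∫⁻ x in cells (l + 1) j, (‖f x - cellMean f (cells l (j / 2))‖₊ : ℝ≥0∞) ^ τ)) :=
            mul_le_mul_right hcV _
        _ = volume (cells (l + 1) j) ^ (-(α * τ)) *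
              (∫⁻ x in cells (l + 1) j, (‖f x - cellMean f (cells (l + 1) j)‖₊ : ℝ≥0∞) ^ τ)
            + volume (cells (l + 1) j) ^ (-(α * τ)) *
              (∫⁻ x in cells (l + 1) j, (‖f x - cellMean f (cells l (j / 2))‖₊ : ℝ≥0∞) ^ τ) := by
            ring
        _ ≤ volume (cells (l + 1) j) ^ (-(α * τ)) *
              (∫⁻ x in cells (l + 1) j, (‖f x - cellMean f (cells (l + 1) j)‖₊ : ℝ≥0∞) ^ τ)
            + (μ2 * volume (cells l (j / 2)) ^ (-(α * τ))) *
              (∫⁻ x in cells l (j / 2), (‖f x - cellMean f (cells l (j / 2))‖₊ : ℝ≥0∞) ^ τ) := by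
            gcongr
        _ = _ := by rw [mul_assoc]
  -- sum everything
  calc sparsityTau τ p f cells
      ≤ ∑' (l : ℕ) (j : ℕ),
          (volume (cells (l + 1) j) ^ (-(α * τ)) *
            (∫⁻ x in cells (l + 1) j, (‖f x - cellMean f (cells (l + 1) j)‖₊ : ℝ≥0∞) ^ τ)
          + μ2 * (volume (cells l (j / 2)) ^ (-(α * τ)) *
            (∫⁻ x in cells l (j / 2), (‖f x - cellMean f (cells l (j / 2))‖₊ : ℝ≥0∞) ^ τ))) := by
        rw [sparsityTau]
        exact ENNReal.tsum_le_tsum fun l => ENNReal.tsum_le_tsum fun j => hterm l j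
    _ = (∑' (l : ℕ) (j : ℕ), volume (cells (l + 1) j) ^ (-(α * τ)) *
            (∫⁻ x in cells (l + 1) j, (‖f x - cellMean f (cells (l + 1) j)‖₊ : ℝ≥0∞) ^ τ))
        + μ2 * ∑' (l : ℕ) (j : ℕ), volume (cells l (j / 2)) ^ (-(α * τ)) *
            (∫⁻ x in cells l (j / 2), (‖f x - cellMean f (cells l (j / 2))‖₊ : ℝ≥0∞) ^ τ) := by
        rw [← ENNReal.tsum_mul_left (a := μ2)]
        rw [← ENNReal.tsum_add]
        refine tsum_congr fun l => ?_
        rw [← ENNReal.tsum_mul_left (a := μ2), ← ENNReal.tsum_add]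
    _ ≤ besovTildeTau α τ f cells + μ2 * (2 * besovTildeTau α τ f cells) := by
        gcongr
        · -- shifted level sum
          rw [besovTildeTau]
          exact ENNReal.tsum_comp_le_tsum_of_injective (fun a b h => Nat.succ_injective h)
            (fun l => ∑' (j : ℕ), volume (cells l j) ^ (-(α * τ)) *
              ∫⁻ x in cells l j, (‖f x - cellMean f (cells l j)‖₊ : ℝ≥0∞) ^ τ)
        · -- halved index sum
          rw [besovTildeTau, ← ENNReal.tsum_mul_left]
          refine ENNReal.tsum_le_tsum fun l => ?_
          have hsplit2 : (∑' (j : ℕ), volume (cells l (j / 2)) ^ (-(α * τ)) *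
                (∫⁻ x in cells l (j / 2), (‖f x - cellMean f (cells l (j / 2))‖₊ : ℝ≥0∞) ^ τ))
              = (∑' (k : ℕ), volume (cells l ((2 * k) / 2)) ^ (-(α * τ)) *
                (∫⁻ x in cells l ((2 * k) / 2), (‖f x - cellMean f (cells l ((2 * k) / 2))‖₊ : ℝ≥0∞) ^ τ))
              + ∑' (k : ℕ), volume (cells l ((2 * k + 1) / 2)) ^ (-(α * τ)) *
                (∫⁻ x in cells l ((2 * k + 1) / 2), (‖f x - cellMean f (cells l ((2 * k + 1) / 2))‖₊ : ℝ≥0∞) ^ τ) :=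
            (tsum_even_add_odd ENNReal.summable ENNReal.summable).symm
          rw [hsplit2]
          have he : ∀ k : ℕ, (2 * k) / 2 = k := fun k => by omega
          have ho : ∀ k : ℕ, (2 * k + 1) / 2 = k := fun k => by omega
          simp only [he, ho]
          rw [two_mul]
    _ = (1 + 2 * μ2) * besovTildeTau α τ f cells := by ring

/-- Dimension-free equivalence `|f|_{B̃_τ^{α,1}(𝒯)} ∼ N_τ(f,𝒯)`: for a tree with geometric
decay parameter `0 < ρ < 1`, `0 < τ ≤ 1`, `1/τ = α + 1/p`, and `f = Σ_{Ω∈𝒯} ψ_Ω`, both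
directions hold with constants depending only on `α, τ, ρ` and not on the dimension `n`. -/
theorem stmt_10 (ρ α p τ : ℝ) (hρ0 : 0 < ρ) (hρ1 : ρ < 1) (hα : 0 < α) (hp : 0 < p)
    (hτ0 : 0 < τ) (hτ1 : τ ≤ 1) (hτ : 1 / τ = α + 1 / p) :
    ∃ C₁ C₂ : ℝ, 0 < C₁ ∧ 0 < C₂ ∧
      ∀ (n d : ℕ) (cells : ℕ → ℕ → Set (Fin n → ℝ))
        (f : (Fin n → ℝ) → EuclideanSpace ℝ (Fin d)),
        (∀ l j, MeasurableSet (cells l j)) →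
        (∀ j, j ≠ 0 → cells 0 j = ∅) →
        (∀ l j, cells (l + 1) (2 * j) ∪ cells (l + 1) (2 * j + 1) = cells l j) →
        (∀ l j, Disjoint (cells (l + 1) (2 * j)) (cells (l + 1) (2 * j + 1))) →
        (∀ l j, volume (cells (l + 1) j) ≤ ENNReal.ofReal ρ * volume (cells l (j / 2))) →
        volume (cells 0 0) < ⊤ →
        IntegrableOn f (cells 0 0) →
        (∀ x ∈ cells 0 0,
          HasSum (fun q : ℕ × ℕ => treeWavelet f cells q.1 q.2 x) (f x)) →
        besovTildeTau α τ f cells ^ (1 / τ)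
            ≤ ENNReal.ofReal C₁ * sparsityTau τ p f cells ^ (1 / τ) ∧
          sparsityTau τ p f cells ^ (1 / τ)
            ≤ ENNReal.ofReal C₂ * besovTildeTau α τ f cells ^ (1 / τ) := by
  have hτne : τ ≠ 0 := hτ0.ne'
  have hkey : τ / p = 1 - α * τ := by
    have h1 : (1 / τ) * τ = (α + 1 / p) * τ := by rw [hτ]
    rw [one_div, inv_mul_cancel₀ hτne] at h1
    have h2 : (α + 1 / p) * τ = α * τ + τ / p := by ring
    rw [h2] at h1
    linarith
  have hlam1 : ρ ^ (α * τ) < 1 := Real.rpow_lt_one hρ0.le hρ1 (mul_pos hα hτ0)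
  have hK₁t : ENNReal.ofReal (ρ ^ (α * τ)) * (1 - ENNReal.ofReal (ρ ^ (α * τ)))⁻¹ ≠ ⊤ := by
    apply ENNReal.mul_ne_top ENNReal.ofReal_ne_top
    apply ENNReal.inv_ne_top.mpr
    rw [Ne, tsub_eq_zero_iff_le]
    exact not_le.mpr (ENNReal.ofReal_lt_one.mpr hlam1)
  have hK₂t : 1 + 2 * ENNReal.ofReal ((1 - ρ) ^ (-(α * τ))) ≠ ⊤ :=
    ENNReal.add_ne_top.mpr ⟨ENNReal.one_ne_top,
      ENNReal.mul_ne_top (by simp) ENNReal.ofReal_ne_top⟩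
  have hpos : ∀ K : ℝ≥0∞, (0:ℝ) < (K ^ (1 / τ)).toReal + 1 := by
    intro K
    have := ENNReal.toReal_nonneg (a := K ^ (1 / τ))
    linarith
  refine ⟨((ENNReal.ofReal (ρ ^ (α * τ)) * (1 - ENNReal.ofReal (ρ ^ (α * τ)))⁻¹)
      ^ (1 / τ)).toReal + 1,
    ((1 + 2 * ENNReal.ofReal ((1 - ρ) ^ (-(α * τ)))) ^ (1 / τ)).toReal + 1,
    hpos _, hpos _, ?_⟩
  intro n d cells f hmeas hroot hcup hdisj hdecay hfin hint hsum
  have final : ∀ (X Y K : ℝ≥0∞), K ≠ ⊤ → X ≤ K * Y →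
      X ^ (1 / τ) ≤ ENNReal.ofReal ((K ^ (1 / τ)).toReal + 1) * Y ^ (1 / τ) := by
    intro X Y K hK h
    have h2 : X ^ (1 / τ) ≤ (K * Y) ^ (1 / τ) := ENNReal.rpow_le_rpow h (by positivity)
    rw [ENNReal.mul_rpow_of_nonneg _ _ (by positivity)] at h2
    refine h2.trans (mul_le_mul_left ?_ _)
    have hKr : K ^ (1 / τ) ≠ ⊤ := ENNReal.rpow_ne_top_of_nonneg (by positivity) hK
    calc K ^ (1 / τ) = ENNReal.ofReal ((K ^ (1 / τ)).toReal) :=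
        (ENNReal.ofReal_toReal hKr).symm
      _ ≤ ENNReal.ofReal ((K ^ (1 / τ)).toReal + 1) := ENNReal.ofReal_le_ofReal (by linarith)
  constructor
  · exact final _ _ _ hK₁t
      (dir1' hρ0 hρ1 hα hp hτ0 hτ1 hkey hmeas hroot hcup hdisj hdecay hfin hsum)
  · exact final _ _ _ hK₂t
      (dir2' hρ0 hρ1 hα hp hτ0 hτ1 hkey hmeas hroot hcup hdisj hdecay hfin hint)
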